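/- For every integer m ≥ 1, the Dedekind sum satisfies 𝐬(m, 4m+1) = (4m − m²)/(12m + 3). -/

import Mathlib

open Classical in
/-- The sawtooth function `((x))`: `x - ⌊x⌋ - 1/2` if `x` is not an integer, `0` otherwise. -/
noncomputable def sawtooth (x : ℝ) : ℝ :=
  if ∃ n : ℤ, x = (n : ℝ) then 0 else x - ⌊x⌋ - 1 / 2

/-- The Dedekind sum `𝐬(q,p) = Σ_{i=1}^{p-1} ((i/p))·((iq/p))`. -/
noncomputable def dedekindSum (q p : ℤ) : ℝ :=
  ∑ i ∈ Finset.Icc (1 : ℤ) (p - 1), sawtooth ((i : ℝ) / (p : ℝ)) * sawtooth ((i : ℝ) * (q : ℝ) / (p : ℝ))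

theorem floor_cast_div (a p : ℤ) (hp : 0 < p) : ⌊(a:ℝ)/(p:ℝ)⌋ = a / p := by
  have hp' : (0:ℝ) < p := by exact_mod_cast hp
  have h1 : (0:ℤ) ≤ a % p := Int.emod_nonneg a (by omega)
  have h2 : a % p < p := Int.emod_lt_of_pos a hp
  have hd := Int.mul_ediv_add_emod a p
  have key : (a:ℝ)/p = ((a/p : ℤ):ℝ) + ((a%p : ℤ):ℝ)/p := by
    field_simp
    linarith [(by exact_mod_cast congrArg (Int.cast : ℤ → ℝ) hd : (p:ℝ) * ((a/p:ℤ):ℝ) + ((a%p:ℤ):ℝ) = a)]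
  rw [key, Int.floor_intCast_add, Int.floor_eq_zero_iff.2, add_zero]
  constructor
  · positivity
  · rw [div_lt_one hp']
    exact_mod_cast h2

theorem saw_eval (a p : ℤ) (hp : 0 < p) (h : ¬ p ∣ a) :
    sawtooth ((a:ℝ)/(p:ℝ)) = ((a % p : ℤ):ℝ)/p - 1/2 := by
  have hp' : (0:ℝ) < p := by exact_mod_cast hp
  have hni : ¬ ∃ n : ℤ, (a:ℝ)/(p:ℝ) = (n : ℝ) := by
    rintro ⟨n, hn⟩
    apply h
    refine ⟨n, ?_⟩
    have : (a:ℝ) = (p:ℝ) * n := by field_simp at hn; linarith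
    exact_mod_cast this
  rw [sawtooth, if_neg hni, floor_cast_div a p hp]
  have hd := Int.mul_ediv_add_emod a p
  have : (p:ℝ) * ((a/p:ℤ):ℝ) + ((a%p:ℤ):ℝ) = a := by exact_mod_cast congrArg (Int.cast : ℤ → ℝ) hd
  field_simp
  linarith

theorem reindex4 (n : ℕ) (g : ℤ → ℝ) :
    ∑ i ∈ Finset.Icc (1:ℤ) (4*(n:ℤ)), g i
      = ∑ j ∈ Finset.Icc (1:ℤ) n, (g (4*j-3) + g (4*j-2) + g (4*j-1) + g (4*j)) := by
  induction n with
  | zero => simp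
  | succ k ih =>
    push_cast
    have e1 : Finset.Icc (1:ℤ) (4*((k:ℤ)+1)) =
        insert (4*((k:ℤ)+1)) (insert (4*((k:ℤ)+1)-1) (insert (4*((k:ℤ)+1)-2) (insert (4*((k:ℤ)+1)-3)
          (Finset.Icc (1:ℤ) (4*(k:ℤ)))))) := by
      ext x; simp; omega
    have e2 : Finset.Icc (1:ℤ) ((k:ℤ)+1) = insert ((k:ℤ)+1) (Finset.Icc (1:ℤ) (k:ℤ)) := by
      ext x; simp; omega
    rw [e1, Finset.sum_insert (by simp; omega),
        Finset.sum_insert (by simp; omega),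
        Finset.sum_insert (by simp; omega),
        Finset.sum_insert (by simp; omega), ih,
        e2, Finset.sum_insert (by simp)]
    ring

theorem sumId (n : ℕ) : ∑ j ∈ Finset.Icc (1:ℤ) (n:ℤ), (j:ℝ) = n*(n+1)/2 := by
  induction n with
  | zero => simp
  | succ k ih =>
    have e2 : Finset.Icc (1:ℤ) ((k+1:ℕ):ℤ) = insert ((k:ℤ)+1) (Finset.Icc (1:ℤ) (k:ℤ)) := by
      ext x; simp; push_cast; omega
    rw [e2, Finset.sum_insert (by simp), ih]
    push_cast; ring

theorem sumSq (n : ℕ) : ∑ j ∈ Finset.Icc (1:ℤ) (n:ℤ), (j:ℝ)^2 = n*(n+1)*(2*n+1)/6 := by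
  induction n with
  | zero => simp
  | succ k ih =>
    have e2 : Finset.Icc (1:ℤ) ((k+1:ℕ):ℤ) = insert ((k:ℤ)+1) (Finset.Icc (1:ℤ) (k:ℤ)) := by
      ext x; simp; push_cast; omega
    rw [e2, Finset.sum_insert (by simp), ih]
    push_cast; ring

/-- For every integer `m ≥ 1`, `𝐬(m, 4m+1) = (4m − m²)/(12m + 3)`. -/
theorem stmt_2 (m : ℤ) (hm : 1 ≤ m) :
    dedekindSum m (4 * m + 1) = (4 * (m : ℝ) - (m : ℝ) ^ 2) / (12 * (m : ℝ) + 3) := by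
  lift m to ℕ using (by omega : 0 ≤ m) with n
  have hn1 : 1 ≤ n := by exact_mod_cast hm
  set q : ℤ := 4 * (n:ℤ) + 1 with hq
  have hp : (0:ℤ) < q := by omega
  have hP0 : (0:ℝ) < ((q:ℤ):ℝ) := by exact_mod_cast hp
  have hP : ((q:ℤ):ℝ) ≠ 0 := ne_of_gt hP0
  have cop : IsCoprime q (n:ℤ) := ⟨1, -4, by rw [hq]; ring⟩
  set g : ℤ → ℝ := fun i =>
    (((i % q : ℤ):ℝ)/((q:ℤ):ℝ) - 1/2) * (((i * (n:ℤ) % q : ℤ):ℝ)/((q:ℤ):ℝ) - 1/2) with hg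
  set N : ℝ := ((n:ℤ):ℝ) with hN
  set P : ℝ := 4*N+1 with hPd
  have hPP : ((q:ℤ):ℝ) = P := by rw [hq, hPd, hN]; push_cast; ring
  have hPne : P ≠ 0 := hPP ▸ hP
  set c2 : ℝ := -16/P^2 with hc2
  set c1 : ℝ := (40*N+22)/P^2 - 6/P with hc1
  set c0 : ℝ := (-10*N-6)/P^2 - (5*N-1)/P + 1 with hc0
  have step1 : ∀ i ∈ Finset.Icc (1:ℤ) (4*(n:ℤ)),
      sawtooth ((i:ℝ)/((q:ℤ):ℝ)) * sawtooth ((i:ℝ)*((n:ℤ):ℝ)/((q:ℤ):ℝ)) = g i := by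
    intro i hi
    simp only [Finset.mem_Icc] at hi
    have hd1 : ¬ q ∣ i := by
      intro h
      have := Int.le_of_dvd (by omega) h
      omega
    have hd2 : ¬ q ∣ i * (n:ℤ) := fun h => hd1 (cop.dvd_of_dvd_mul_right h)
    have : (i:ℝ)*((n:ℤ):ℝ)/((q:ℤ):ℝ) = ((i*(n:ℤ) : ℤ):ℝ)/((q:ℤ):ℝ) := by push_cast; ring
    rw [this, saw_eval _ _ hp hd1, saw_eval _ _ hp hd2]
  have step2 : ∀ j ∈ Finset.Icc (1:ℤ) (n:ℤ),
      g (4*j-3) + g (4*j-2) + g (4*j-1) + g (4*j) = c2 * (j:ℝ)^2 + c1 * (j:ℝ) + c0 := by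
    intro j hj
    simp only [Finset.mem_Icc] at hj
    have e0a : (4*j-3) % q = 4*j-3 := Int.emod_eq_of_lt (by omega) (by omega)
    have e0b : (4*j-2) % q = 4*j-2 := Int.emod_eq_of_lt (by omega) (by omega)
    have e0c : (4*j-1) % q = 4*j-1 := Int.emod_eq_of_lt (by omega) (by omega)
    have e0d : (4*j) % q = 4*j := Int.emod_eq_of_lt (by omega) (by omega)
    have e1 : (4*j-3) * (n:ℤ) % q = (n:ℤ)+1-j := by
      rw [show (4*j-3)*(n:ℤ) = ((n:ℤ)+1-j) + (j-1)*q from by rw [hq]; ring,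
        Int.add_mul_emod_self_right, Int.emod_eq_of_lt (by omega) (by omega)]
    have e2 : (4*j-2) * (n:ℤ) % q = 2*(n:ℤ)+1-j := by
      rw [show (4*j-2)*(n:ℤ) = (2*(n:ℤ)+1-j) + (j-1)*q from by rw [hq]; ring,
        Int.add_mul_emod_self_right, Int.emod_eq_of_lt (by omega) (by omega)]
    have e3 : (4*j-1) * (n:ℤ) % q = 3*(n:ℤ)+1-j := by
      rw [show (4*j-1)*(n:ℤ) = (3*(n:ℤ)+1-j) + (j-1)*q from by rw [hq]; ring,
        Int.add_mul_emod_self_right, Int.emod_eq_of_lt (by omega) (by omega)]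
    have e4 : (4*j) * (n:ℤ) % q = 4*(n:ℤ)+1-j := by
      rw [show (4*j)*(n:ℤ) = (4*(n:ℤ)+1-j) + (j-1)*q from by rw [hq]; ring,
        Int.add_mul_emod_self_right, Int.emod_eq_of_lt (by omega) (by omega)]
    simp only [hg, e0a, e0b, e0c, e0d, e1, e2, e3, e4, hPP, hc2, hc1, hc0]
    rw [hN]
    push_cast
    field_simp
    ring
  have hcard : ((Finset.Icc (1:ℤ) (n:ℤ)).card : ℝ) = N := by
    rw [Int.card_Icc]
    rw [hN]
    have : ((n:ℤ) + 1 - 1).toNat = n := by omega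
    rw [this]
    push_cast; ring
  calc dedekindSum (n:ℤ) (4*(n:ℤ)+1)
      = ∑ i ∈ Finset.Icc (1:ℤ) (4*(n:ℤ)), g i := by
        unfold dedekindSum
        rw [show (4*(n:ℤ)+1-1 : ℤ) = 4*(n:ℤ) from by ring]
        exact Finset.sum_congr rfl step1
    _ = ∑ j ∈ Finset.Icc (1:ℤ) (n:ℤ), (g (4*j-3) + g (4*j-2) + g (4*j-1) + g (4*j)) :=
        reindex4 n g
    _ = ∑ j ∈ Finset.Icc (1:ℤ) (n:ℤ), (c2 * (j:ℝ)^2 + c1 * (j:ℝ) + c0) :=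
        Finset.sum_congr rfl step2
    _ = c2 * (N*(N+1)*(2*N+1)/6) + c1 * (N*(N+1)/2) + c0 * N := by
        rw [Finset.sum_add_distrib, Finset.sum_add_distrib, ← Finset.mul_sum, ← Finset.mul_sum,
          sumSq, sumId, Finset.sum_const, nsmul_eq_mul, hcard, hN]
        push_cast; ring
    _ = (4 * ((n:ℤ):ℝ) - ((n:ℤ):ℝ) ^ 2) / (12 * ((n:ℤ):ℝ) + 3) := by
        rw [hc2, hc1, hc0, hPd, hN]
        have h3 : (12:ℝ) * ((n:ℤ):ℝ) + 3 ≠ 0 := by positivity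
        have h4 : (4:ℝ) * ((n:ℤ):ℝ) + 1 ≠ 0 := by positivity
        field_simp
        ring
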